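/- Let d ≥ 1 and let Ω ⊆ ℝ^d be a connected open set. Suppose u, v : Ω → ℝ^d are maps of class C¹ such that (∇u(x))ᵀ ∇u(x) = (∇v(x))ᵀ ∇v(x) for all x ∈ Ω, this common matrix is positive definite at every point, and det ∇u(x) > 0 and det ∇v(x) > 0 for all x ∈ Ω. Then there exist R ∈ SO(d) and c ∈ ℝ^d such that v(x) = R u(x) + c for all x ∈ Ω; that is, orientation-preserving equidimensional isometric immersions of a given metric are unique up to rigid motions. -/

import Mathlib

noncomputable section
open Matrix Set Filter Topology RealInnerProductSpace

lemma toCLM_of_apply {d : ℕ} (A : EuclideanSpace ℝ (Fin d) →L[ℝ] EuclideanSpace ℝ (Fin d)) :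
    (Matrix.toEuclideanCLM (𝕜 := ℝ) (Matrix.of fun i j => A (EuclideanSpace.single j 1) i)
      : EuclideanSpace ℝ (Fin d) →L[ℝ] EuclideanSpace ℝ (Fin d)) = A := by
  ext z i
  have hz : z = ∑ j, z j • EuclideanSpace.single j (1:ℝ) := by
    have := (EuclideanSpace.basisFun (Fin d) ℝ).sum_repr z
    simp only [EuclideanSpace.basisFun_apply, EuclideanSpace.basisFun_repr] at this
    exact this.symm
  have h1 : WithLp.equiv 2 _ ((Matrix.toEuclideanCLM (𝕜 := ℝ)
      (Matrix.of fun i j => A (EuclideanSpace.single j 1) i)) z) i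
      = ∑ j, A (EuclideanSpace.single j 1) i * z j := by
    change ((Matrix.of fun i j => A (EuclideanSpace.single j 1) i) *ᵥ WithLp.ofLp z) i = _
    simp [Matrix.mulVec, dotProduct]
  have h2 : A z i = ∑ j, z j * A (EuclideanSpace.single j 1) i := by
    conv_lhs => rw [hz]
    rw [map_sum]
    have : ∀ x : Fin d, A (z x • EuclideanSpace.single x (1:ℝ)) = z x • A (EuclideanSpace.single x 1) :=
      fun x => A.map_smul _ _
    simp only [this]
    have hsum : (∑ x : Fin d, z x • A (EuclideanSpace.single x (1:ℝ))) i
        = ∑ x : Fin d, (z x • A (EuclideanSpace.single x (1:ℝ))) i := by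
      rw [WithLp.ofLp_sum]; exact Finset.sum_apply i Finset.univ _
    rw [hsum]
    simp [smul_eq_mul]
  have h1' : ((Matrix.toEuclideanCLM (𝕜 := ℝ)
      (Matrix.of fun i j => A (EuclideanSpace.single j 1) i)) z) i
      = ∑ j, A (EuclideanSpace.single j 1) i * z j := h1
  rw [h1', h2]
  exact Finset.sum_congr rfl fun j _ => mul_comm _ _

/-- locally constant on preconnected set implies constant -/
lemma const_of_locally_const {X α : Type*} [TopologicalSpace X] {s : Set X}
    (hs : IsPreconnected s) (f : X → α)
    (h : ∀ x ∈ s, ∀ᶠ y in 𝓝 x, f y = f x) {x₀ : X} (hx₀ : x₀ ∈ s) :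
    ∀ x ∈ s, f x = f x₀ := by
  set A : Set X := {y | ∀ᶠ z in 𝓝 y, f z = f x₀} with hA
  set B : Set X := {y | ∀ᶠ z in 𝓝 y, f z ≠ f x₀} with hB
  have hAo : IsOpen A := isOpen_setOf_eventually_nhds
  have hBo : IsOpen B := isOpen_setOf_eventually_nhds
  have hdis : Disjoint A B := by
    rw [Set.disjoint_left]
    intro y hy hy'
    have := (hy.and hy').self_of_nhds
    exact this.2 this.1
  have hsub : s ⊆ A ∪ B := by
    intro x hx
    rcases eq_or_ne (f x) (f x₀) with he | he
    · exact Or.inl ((h x hx).mono fun y hy => hy.trans he)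
    · exact Or.inr ((h x hx).mono fun y hy => hy ▸ he)
  have hne : (s ∩ A).Nonempty := ⟨x₀, hx₀, (h x₀ hx₀)⟩
  have := hs.subset_left_of_subset_union hAo hBo hdis hsub hne
  exact fun x hx => ((this hx).self_of_nhds)

/-- The Jacobian matrix (d×d) of a map `u : ℝᵈ → ℝᵈ` at a point `x`. -/
def Jac {d : ℕ} (u : EuclideanSpace ℝ (Fin d) → EuclideanSpace ℝ (Fin d))
    (x : EuclideanSpace ℝ (Fin d)) : Matrix (Fin d) (Fin d) ℝ :=
  Matrix.of fun i j => fderiv ℝ u x (EuclideanSpace.single j 1) i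

set_option maxHeartbeats 1000000 in
set_option synthInstance.maxHeartbeats 400000 in
/-- **Rigidity of orientation-preserving equidimensional isometric immersions.** If two
`C¹` maps `u, v : Ω → ℝᵈ` on a connected open set induce the same pointwise positive
definite metric `(∇u)ᵀ∇u = (∇v)ᵀ∇v` and are both orientation preserving, then `v = R u + c`
for a rotation `R ∈ SO(d)` and a vector `c`. -/
theorem equidimensional_rigidity (d : ℕ) (hd : 1 ≤ d)
    (Ω : Set (EuclideanSpace ℝ (Fin d))) (hΩo : IsOpen Ω) (hΩc : IsConnected Ω)
    (u v : EuclideanSpace ℝ (Fin d) → EuclideanSpace ℝ (Fin d))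
    (hu : ContDiffOn ℝ 1 u Ω) (hv : ContDiffOn ℝ 1 v Ω)
    (heq : ∀ x ∈ Ω, (Jac u x)ᵀ * Jac u x = (Jac v x)ᵀ * Jac v x)
    (hpos : ∀ x ∈ Ω, ((Jac u x)ᵀ * Jac u x).PosDef)
    (hdu : ∀ x ∈ Ω, 0 < (Jac u x).det)
    (hdv : ∀ x ∈ Ω, 0 < (Jac v x).det) :
    ∃ (R : Matrix (Fin d) (Fin d) ℝ) (c : Fin d → ℝ),
      Rᵀ * R = 1 ∧ R.det = 1 ∧
      ∀ x ∈ Ω, ∀ i : Fin d, v x i = (∑ j : Fin d, R i j * u x j) + c i := by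
  classical
  set A : EuclideanSpace ℝ (Fin d) → (EuclideanSpace ℝ (Fin d) →L[ℝ] EuclideanSpace ℝ (Fin d)) := fun x => fderiv ℝ u x with hAdef
  set B : EuclideanSpace ℝ (Fin d) → (EuclideanSpace ℝ (Fin d) →L[ℝ] EuclideanSpace ℝ (Fin d)) := fun x => fderiv ℝ v x with hBdef
  have hAc : ∀ x, (Matrix.toEuclideanCLM (𝕜 := ℝ) (Jac u x) : EuclideanSpace ℝ (Fin d) →L[ℝ] EuclideanSpace ℝ (Fin d)) = A x :=
    fun x => toCLM_of_apply _
  have hBc : ∀ x, (Matrix.toEuclideanCLM (𝕜 := ℝ) (Jac v x) : EuclideanSpace ℝ (Fin d) →L[ℝ] EuclideanSpace ℝ (Fin d)) = B x :=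
    fun x => toCLM_of_apply _
  -- strict differentiability
  have hsu : ∀ x ∈ Ω, HasStrictFDerivAt u (A x) x := fun x hx =>
    (hu.contDiffAt (hΩo.mem_nhds hx)).hasStrictFDerivAt one_ne_zero
  have hsv : ∀ x ∈ Ω, HasStrictFDerivAt v (B x) x := fun x hx =>
    (hv.contDiffAt (hΩo.mem_nhds hx)).hasStrictFDerivAt one_ne_zero
  -- units
  have hJuU : ∀ x ∈ Ω, IsUnit (Jac u x) := fun x hx =>
    (Matrix.isUnit_iff_isUnit_det _).2 (isUnit_iff_ne_zero.2 (ne_of_gt (hdu x hx)))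
  have hJvU : ∀ x ∈ Ω, IsUnit (Jac v x) := fun x hx =>
    (Matrix.isUnit_iff_isUnit_det _).2 (isUnit_iff_ne_zero.2 (ne_of_gt (hdv x hx)))
  have hAU : ∀ x ∈ Ω, IsUnit (A x) := fun x hx => by
    rw [← hAc]; exact (hJuU x hx).map (Matrix.toEuclideanCLM (𝕜 := ℝ))
  have hBU : ∀ x ∈ Ω, IsUnit (B x) := fun x hx => by
    rw [← hBc]; exact (hJvU x hx).map (Matrix.toEuclideanCLM (𝕜 := ℝ))
  -- inner product preservation
  have hinner : ∀ x ∈ Ω, ∀ p q : EuclideanSpace ℝ (Fin d), ⟪A x p, A x q⟫ = ⟪B x p, B x q⟫ := by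
    intro x hx p q
    have h1 : ((Jac u x)ᵀ : Matrix (Fin d) (Fin d) ℝ) = star (Jac u x) := by
      ext i j; simp [Matrix.conjTranspose_apply]
    have h2 : ((Jac v x)ᵀ : Matrix (Fin d) (Fin d) ℝ) = star (Jac v x) := by
      ext i j; simp [Matrix.conjTranspose_apply]
    have := heq x hx
    rw [h1, h2] at this
    have hmap := congrArg (Matrix.toEuclideanCLM (𝕜 := ℝ)) this
    rw [_root_.map_mul, _root_.map_mul, map_star, map_star, hAc, hBc] at hmap
    rw [ContinuousLinearMap.star_eq_adjoint, ContinuousLinearMap.star_eq_adjoint] at hmap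
    have hax : ⟪A x p, A x q⟫ = ⟪(ContinuousLinearMap.adjoint (A x) * A x) p, q⟫ := by
      rw [ContinuousLinearMap.mul_apply, ContinuousLinearMap.adjoint_inner_left]
    have hbx : ⟪B x p, B x q⟫ = ⟪(ContinuousLinearMap.adjoint (B x) * B x) p, q⟫ := by
      rw [ContinuousLinearMap.mul_apply, ContinuousLinearMap.adjoint_inner_left]
    rw [hax, hbx, hmap]
  -- continuous linear equivs with coe = fderiv
  have heAex : ∀ x ∈ Ω, ∃ e : EuclideanSpace ℝ (Fin d) ≃L[ℝ] EuclideanSpace ℝ (Fin d),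
      (e : EuclideanSpace ℝ (Fin d) →L[ℝ] EuclideanSpace ℝ (Fin d)) = A x := by
    intro x hx
    obtain ⟨w, hw⟩ := hAU x hx
    exact ⟨ContinuousLinearEquiv.ofUnit w, by ext z; rw [← hw]; rfl⟩
  have heBex : ∀ x ∈ Ω, ∃ e : EuclideanSpace ℝ (Fin d) ≃L[ℝ] EuclideanSpace ℝ (Fin d),
      (e : EuclideanSpace ℝ (Fin d) →L[ℝ] EuclideanSpace ℝ (Fin d)) = B x := by
    intro x hx
    obtain ⟨w, hw⟩ := hBU x hx
    exact ⟨ContinuousLinearEquiv.ofUnit w, by ext z; rw [← hw]; rfl⟩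
  choose eA heA using heAex
  choose eB heB using heBex
  have hRinv : ∀ x (hx : x ∈ Ω), Ring.inverse (A x)
      = ((eA x hx).symm : EuclideanSpace ℝ (Fin d) →L[ℝ] EuclideanSpace ℝ (Fin d)) := by
    intro x hx
    have h1 : ((eA x hx) : EuclideanSpace ℝ (Fin d) →L[ℝ] EuclideanSpace ℝ (Fin d))
        * ((eA x hx).symm : EuclideanSpace ℝ (Fin d) →L[ℝ] EuclideanSpace ℝ (Fin d)) = 1 := by
      ext z
      simp [ContinuousLinearMap.mul_apply]
    have h2 : ((eA x hx).symm : EuclideanSpace ℝ (Fin d) →L[ℝ] EuclideanSpace ℝ (Fin d))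
        * ((eA x hx) : EuclideanSpace ℝ (Fin d) →L[ℝ] EuclideanSpace ℝ (Fin d)) = 1 := by
      ext z
      simp [ContinuousLinearMap.mul_apply]
    rw [← heA x hx]
    exact Ring.inverse_unit ⟨_, _, h1, h2⟩
  set Φ : EuclideanSpace ℝ (Fin d) →
      (EuclideanSpace ℝ (Fin d) →L[ℝ] EuclideanSpace ℝ (Fin d)) :=
    fun x => B x * Ring.inverse (A x) with hΦdef
  have hΦe : ∀ x (hx : x ∈ Ω), Φ x
      = (B x).comp ((eA x hx).symm : EuclideanSpace ℝ (Fin d) →L[ℝ] EuclideanSpace ℝ (Fin d)) := by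
    intro x hx
    rw [hΦdef]
    simp only [hRinv x hx]
    rfl
  have hRinvB : ∀ x (hx : x ∈ Ω), Ring.inverse (B x)
      = ((eB x hx).symm : EuclideanSpace ℝ (Fin d) →L[ℝ] EuclideanSpace ℝ (Fin d)) := by
    intro x hx
    have h1 : ((eB x hx) : EuclideanSpace ℝ (Fin d) →L[ℝ] EuclideanSpace ℝ (Fin d))
        * ((eB x hx).symm : EuclideanSpace ℝ (Fin d) →L[ℝ] EuclideanSpace ℝ (Fin d)) = 1 := by
      ext z
      simp [ContinuousLinearMap.mul_apply]
    have h2 : ((eB x hx).symm : EuclideanSpace ℝ (Fin d) →L[ℝ] EuclideanSpace ℝ (Fin d))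
        * ((eB x hx) : EuclideanSpace ℝ (Fin d) →L[ℝ] EuclideanSpace ℝ (Fin d)) = 1 := by
      ext z
      simp [ContinuousLinearMap.mul_apply]
    rw [← heB x hx]
    exact Ring.inverse_unit ⟨_, _, h1, h2⟩
  set Ψ : EuclideanSpace ℝ (Fin d) →
      (EuclideanSpace ℝ (Fin d) →L[ℝ] EuclideanSpace ℝ (Fin d)) :=
    fun x => A x * Ring.inverse (B x) with hΨdef
  have hΨe : ∀ x (hx : x ∈ Ω), Ψ x
      = (A x).comp ((eB x hx).symm : EuclideanSpace ℝ (Fin d) →L[ℝ] EuclideanSpace ℝ (Fin d)) := by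
    intro x hx
    rw [hΨdef]
    simp only [hRinvB x hx]
    rfl
  have hΦiso : ∀ x (hx : x ∈ Ω), ∀ p q : EuclideanSpace ℝ (Fin d),
      ⟪Φ x p, Φ x q⟫ = ⟪p, q⟫ := by
    intro x hx p q
    rw [hΦe x hx]
    have e1 : A x ((eA x hx).symm p) = p := by
      rw [← heA x hx]; exact (eA x hx).apply_symm_apply p
    have e2 : A x ((eA x hx).symm q) = q := by
      rw [← heA x hx]; exact (eA x hx).apply_symm_apply q
    calc ⟪((B x).comp ((eA x hx).symm :
            EuclideanSpace ℝ (Fin d) →L[ℝ] EuclideanSpace ℝ (Fin d))) p,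
          ((B x).comp ((eA x hx).symm :
            EuclideanSpace ℝ (Fin d) →L[ℝ] EuclideanSpace ℝ (Fin d))) q⟫
        = ⟪B x ((eA x hx).symm p), B x ((eA x hx).symm q)⟫ := rfl
      _ = ⟪A x ((eA x hx).symm p), A x ((eA x hx).symm q)⟫ := (hinner x hx _ _).symm
      _ = ⟪p, q⟫ := by rw [e1, e2]
  have hΨiso : ∀ x (hx : x ∈ Ω), ∀ p q : EuclideanSpace ℝ (Fin d),
      ⟪Ψ x p, Ψ x q⟫ = ⟪p, q⟫ := by
    intro x hx p q
    rw [hΨe x hx]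
    have e1 : B x ((eB x hx).symm p) = p := by
      rw [← heB x hx]; exact (eB x hx).apply_symm_apply p
    have e2 : B x ((eB x hx).symm q) = q := by
      rw [← heB x hx]; exact (eB x hx).apply_symm_apply q
    calc ⟪((A x).comp ((eB x hx).symm :
            EuclideanSpace ℝ (Fin d) →L[ℝ] EuclideanSpace ℝ (Fin d))) p,
          ((A x).comp ((eB x hx).symm :
            EuclideanSpace ℝ (Fin d) →L[ℝ] EuclideanSpace ℝ (Fin d))) q⟫
        = ⟪A x ((eB x hx).symm p), A x ((eB x hx).symm q)⟫ := rfl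
      _ = ⟪B x ((eB x hx).symm p), B x ((eB x hx).symm q)⟫ := hinner x hx _ _
      _ = ⟪p, q⟫ := by rw [e1, e2]
  have hnorm_of_iso : ∀ T : EuclideanSpace ℝ (Fin d) →L[ℝ] EuclideanSpace ℝ (Fin d),
      (∀ p q : EuclideanSpace ℝ (Fin d), ⟪T p, T q⟫ = ⟪p, q⟫) →
      ∀ p : EuclideanSpace ℝ (Fin d), ‖T p‖ = ‖p‖ := by
    intro T hT p
    have h1 : ‖T p‖ * ‖T p‖ = ‖p‖ * ‖p‖ := by
      rw [← real_inner_self_eq_norm_mul_norm, ← real_inner_self_eq_norm_mul_norm]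
      exact hT p p
    nlinarith [norm_nonneg (T p), norm_nonneg p]
  have hΦop : ∀ x (hx : x ∈ Ω), ‖Φ x‖ ≤ 1 := by
    intro x hx
    refine ContinuousLinearMap.opNorm_le_bound _ zero_le_one fun z => ?_
    rw [hnorm_of_iso (Φ x) (hΦiso x hx) z, one_mul]
  have hΨop : ∀ x (hx : x ∈ Ω), ‖Ψ x‖ ≤ 1 := by
    intro x hx
    refine ContinuousLinearMap.opNorm_le_bound _ zero_le_one fun z => ?_
    rw [hnorm_of_iso (Ψ x) (hΨiso x hx) z, one_mul]
  have key : ∀ x₁ ∈ Ω, ∀ᶠ x in 𝓝 x₁, Φ x = Φ x₁ := by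
    intro x₁ hx₁
    have hsu' : HasStrictFDerivAt u
        ((eA x₁ hx₁ : EuclideanSpace ℝ (Fin d) →L[ℝ] EuclideanSpace ℝ (Fin d))) x₁ := by
      rw [heA x₁ hx₁]; exact hsu x₁ hx₁
    have hsv' : HasStrictFDerivAt v
        ((eB x₁ hx₁ : EuclideanSpace ℝ (Fin d) →L[ℝ] EuclideanSpace ℝ (Fin d))) x₁ := by
      rw [heB x₁ hx₁]; exact hsv x₁ hx₁
    set Ph := hsu'.toOpenPartialHomeomorph u with hPhdef
    set Qh := hsv'.toOpenPartialHomeomorph v with hQhdef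
    have hx₁P : x₁ ∈ Ph.source := hsu'.mem_toOpenPartialHomeomorph_source
    have hy₁P : u x₁ ∈ Ph.target := hsu'.image_mem_toOpenPartialHomeomorph_target
    have hx₁Q : x₁ ∈ Qh.source := hsv'.mem_toOpenPartialHomeomorph_source
    have hz₁Q : v x₁ ∈ Qh.target := hsv'.image_mem_toOpenPartialHomeomorph_target
    set gi : EuclideanSpace ℝ (Fin d) → EuclideanSpace ℝ (Fin d) := ⇑Ph.symm with hgidef
    set hi : EuclideanSpace ℝ (Fin d) → EuclideanSpace ℝ (Fin d) := ⇑Qh.symm with hhidef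
    have hgu : ∀ y ∈ Ph.target, u (gi y) = y := fun y hy => Ph.right_inv hy
    have hug : ∀ x ∈ Ph.source, gi (u x) = x := fun x hx => Ph.left_inv hx
    have hvh : ∀ z ∈ Qh.target, v (hi z) = z := fun z hz => Qh.right_inv hz
    have hhv : ∀ x ∈ Qh.source, hi (v x) = x := fun x hx => Qh.left_inv hx
    set w : EuclideanSpace ℝ (Fin d) → EuclideanSpace ℝ (Fin d) := fun y => v (gi y) with hwdef
    set ω : EuclideanSpace ℝ (Fin d) → EuclideanSpace ℝ (Fin d) := fun z => u (hi z) with hωdef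
    -- target ball for ω
    have hhc : ContinuousAt hi (v x₁) := Qh.symm.continuousAt (by
      rw [OpenPartialHomeomorph.symm_source]; exact hz₁Q)
    have hhx : hi (v x₁) = x₁ := hhv x₁ hx₁Q
    have hhtend : Filter.Tendsto hi (𝓝 (v x₁)) (𝓝 x₁) := by
      have := hhc.tendsto; rwa [hhx] at this
    have hVev : ∀ᶠ z in 𝓝 (v x₁), z ∈ Qh.target ∧ hi z ∈ Ω := by
      have h1 : ∀ᶠ z in 𝓝 (v x₁), z ∈ Qh.target := Qh.open_target.eventually_mem hz₁Q
      have h3 : ∀ᶠ z in 𝓝 (v x₁), hi z ∈ Ω := hhtend.eventually (hΩo.eventually_mem hx₁)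
      exact h1.and h3
    obtain ⟨δ, hδ, hVsub⟩ := Metric.eventually_nhds_iff_ball.1 hVev
    have hωd : ∀ z ∈ Metric.ball (v x₁) δ, HasFDerivAt ω (Ψ (hi z)) z := by
      intro z hz
      obtain ⟨hzQ, hhz⟩ := hVsub z hz
      have hgd : HasFDerivAt hi
          (((eB (hi z) hhz).symm : EuclideanSpace ℝ (Fin d) →L[ℝ] EuclideanSpace ℝ (Fin d))) z :=
        Qh.hasFDerivAt_symm hzQ (by rw [heB (hi z) hhz]; exact (hsv (hi z) hhz).hasFDerivAt)
      have := ((hsu (hi z) hhz).hasFDerivAt).comp z hgd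
      rwa [← hΨe (hi z) hhz] at this
    have hωlip : ∀ a ∈ Metric.ball (v x₁) δ, ∀ b ∈ Metric.ball (v x₁) δ,
        ‖ω a - ω b‖ ≤ ‖a - b‖ := by
      intro a ha b hb
      have := (convex_ball (v x₁) δ).norm_image_sub_le_of_norm_hasFDerivWithin_le
        (fun z hz => (hωd z hz).hasFDerivWithinAt)
        (fun z hz => hΨop (hi z) (hVsub z hz).2) hb ha
      rwa [one_mul] at this
    -- source ball for w
    have hgc : ContinuousAt gi (u x₁) := Ph.symm.continuousAt (by
      rw [OpenPartialHomeomorph.symm_source]; exact hy₁P)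
    have hgx : gi (u x₁) = x₁ := hug x₁ hx₁P
    have hgtend : Filter.Tendsto gi (𝓝 (u x₁)) (𝓝 x₁) := by
      have := hgc.tendsto; rwa [hgx] at this
    have hwtend : Filter.Tendsto w (𝓝 (u x₁)) (𝓝 (v x₁)) := by
      have hvc : Filter.Tendsto v (𝓝 x₁) (𝓝 (v x₁)) := ((hsv x₁ hx₁).hasFDerivAt.continuousAt)
      exact hvc.comp hgtend
    have hUev : ∀ᶠ a in 𝓝 (u x₁), a ∈ Ph.target ∧ gi a ∈ Ω
        ∧ w a ∈ Metric.ball (v x₁) δ ∧ hi (v (gi a)) = gi a := by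
      have e1 : ∀ᶠ a in 𝓝 (u x₁), a ∈ Ph.target := Ph.open_target.eventually_mem hy₁P
      have e2 : ∀ᶠ a in 𝓝 (u x₁), gi a ∈ Ω := hgtend.eventually (hΩo.eventually_mem hx₁)
      have e3 : ∀ᶠ a in 𝓝 (u x₁), w a ∈ Metric.ball (v x₁) δ :=
        hwtend.eventually (Metric.isOpen_ball.eventually_mem (Metric.mem_ball_self hδ))
      have e4' : ∀ᶠ x in 𝓝 x₁, hi (v x) = x :=
        Filter.eventually_of_mem (Qh.open_source.mem_nhds hx₁Q) hhv
      have e4 : ∀ᶠ a in 𝓝 (u x₁), hi (v (gi a)) = gi a := hgtend.eventually e4'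
      exact e1.and (e2.and (e3.and e4))
    obtain ⟨ε, hε, hUsub⟩ := Metric.eventually_nhds_iff_ball.1 hUev
    set U := Metric.ball (u x₁) ε with hUdef
    have hy₁U : u x₁ ∈ U := Metric.mem_ball_self hε
    have hwd : ∀ y ∈ U, HasFDerivAt w (Φ (gi y)) y := by
      intro y hy
      obtain ⟨hyP, hgy, -, -⟩ := hUsub y hy
      have hgd : HasFDerivAt gi
          (((eA (gi y) hgy).symm : EuclideanSpace ℝ (Fin d) →L[ℝ] EuclideanSpace ℝ (Fin d))) y :=
        Ph.hasFDerivAt_symm hyP (by rw [heA (gi y) hgy]; exact (hsu (gi y) hgy).hasFDerivAt)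
      have := ((hsv (gi y) hgy).hasFDerivAt).comp y hgd
      rwa [← hΦe (gi y) hgy] at this
    -- local isometry of w on U
    have hwiso : ∀ a ∈ U, ∀ b ∈ U, ‖w a - w b‖ = ‖a - b‖ := by
      intro a ha b hb
      have hle : ‖w a - w b‖ ≤ ‖a - b‖ := by
        have := (convex_ball (u x₁) ε).norm_image_sub_le_of_norm_hasFDerivWithin_le
          (fun y hy => (hwd y hy).hasFDerivWithinAt)
          (fun y hy => hΦop (gi y) (hUsub y hy).2.1) hb ha
        rwa [one_mul] at this
      have hinv : ∀ a' ∈ U, ω (w a') = a' := by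
        intro a' ha'
        obtain ⟨haP, -, -, h4⟩ := hUsub a' ha'
        show u (hi (v (gi a'))) = a'
        rw [h4]
        exact hgu a' haP
      have hge : ‖a - b‖ ≤ ‖w a - w b‖ := by
        have h1 : ω (w a) = a := hinv a ha
        have h2 : ω (w b) = b := hinv b hb
        have := hωlip (w a) (hUsub a ha).2.2.1 (w b) (hUsub b hb).2.2.1
        rwa [h1, h2] at this
      exact le_antisymm hle hge
    -- derivative of w at u x₁
    have hwdy₁ : HasFDerivAt w (Φ x₁) (u x₁) := by
      have := hwd (u x₁) hy₁U
      rwa [hgx] at this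
    -- w is affine on U
    have waff : ∀ a ∈ U, w a = w (u x₁) + Φ x₁ (a - u x₁) := by
      intro a ha
      have hUnhd : U ∈ 𝓝 (u x₁) := Metric.isOpen_ball.mem_nhds hy₁U
      have hFG : ∀ y ∈ U, ⟪w a - w (u x₁), w y - w (u x₁)⟫ = ⟪a - u x₁, y - u x₁⟫ := by
        intro y hy
        have d1 : ‖w a - w (u x₁)‖ = ‖a - u x₁‖ := hwiso a ha (u x₁) hy₁U
        have d2 : ‖w y - w (u x₁)‖ = ‖y - u x₁‖ := hwiso y hy (u x₁) hy₁U
        have d3 : ‖w a - w y‖ = ‖a - y‖ := hwiso a ha y hy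
        have n1 := norm_sub_sq_real (w a - w (u x₁)) (w y - w (u x₁))
        have n2 := norm_sub_sq_real (a - u x₁) (y - u x₁)
        rw [sub_sub_sub_cancel_right] at n1 n2
        rw [d1, d2, d3] at n1
        rw [n2] at n1
        linarith [n1]
      have hF : HasFDerivAt (fun y => ⟪w a - w (u x₁), w y - w (u x₁)⟫)
          ((innerSL ℝ (w a - w (u x₁))).comp (Φ x₁)) (u x₁) :=
        (innerSL ℝ (w a - w (u x₁))).hasFDerivAt.comp (u x₁) (hwdy₁.sub_const (w (u x₁)))
      have hG : HasFDerivAt (fun y : EuclideanSpace ℝ (Fin d) => ⟪a - u x₁, y - u x₁⟫)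
          (innerSL ℝ (a - u x₁) : EuclideanSpace ℝ (Fin d) →L[ℝ] ℝ) (u x₁) := by
        have hid : HasFDerivAt (fun y : EuclideanSpace ℝ (Fin d) => y - u x₁)
            (ContinuousLinearMap.id ℝ (EuclideanSpace ℝ (Fin d))) (u x₁) :=
          (hasFDerivAt_id (u x₁)).sub_const (u x₁)
        have := (innerSL ℝ (a - u x₁)).hasFDerivAt.comp (u x₁) hid
        rw [ContinuousLinearMap.comp_id] at this
        exact this
      have hFG' : (fun y => ⟪w a - w (u x₁), w y - w (u x₁)⟫)
          =ᶠ[𝓝 (u x₁)] (fun y : EuclideanSpace ℝ (Fin d) => ⟪a - u x₁, y - u x₁⟫) :=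
        Filter.eventually_of_mem hUnhd hFG
      have hF2 : HasFDerivAt (fun y => ⟪w a - w (u x₁), w y - w (u x₁)⟫)
          (innerSL ℝ (a - u x₁) : EuclideanSpace ℝ (Fin d) →L[ℝ] ℝ) (u x₁) :=
        hG.congr_of_eventuallyEq hFG'
      have hder := hF.unique hF2
      have hkey : ∀ k : EuclideanSpace ℝ (Fin d),
          ⟪w a - w (u x₁), Φ x₁ k⟫ = ⟪a - u x₁, k⟫ := by
        intro k
        have := congrFun (congrArg DFunLike.coe hder) k
        exact this
      have hsur : ∀ z : EuclideanSpace ℝ (Fin d), ∃ k, Φ x₁ k = z := by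
        intro z
        refine ⟨eA x₁ hx₁ ((eB x₁ hx₁).symm z), ?_⟩
        rw [hΦe x₁ hx₁]
        show B x₁ ((eA x₁ hx₁).symm ((eA x₁ hx₁) ((eB x₁ hx₁).symm z))) = z
        rw [(eA x₁ hx₁).symm_apply_apply, ← heB x₁ hx₁]
        exact (eB x₁ hx₁).apply_symm_apply z
      have hzero : w a - w (u x₁) - Φ x₁ (a - u x₁) = 0 := by
        obtain ⟨k, hk⟩ := hsur (w a - w (u x₁) - Φ x₁ (a - u x₁))
        have h1 := hkey k
        have h2 : ⟪a - u x₁, k⟫ = ⟪Φ x₁ (a - u x₁), Φ x₁ k⟫ := (hΦiso x₁ hx₁ _ _).symm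
        have h3 : ⟪w a - w (u x₁) - Φ x₁ (a - u x₁), Φ x₁ k⟫ = 0 := by
          rw [inner_sub_left, h1, h2]
          ring
        rw [hk] at h3
        exact inner_self_eq_zero.1 h3
      have h4 : w a - w (u x₁) = Φ x₁ (a - u x₁) := by
        have := sub_eq_zero.1 hzero
        exact this
      rw [← h4]
      abel
    -- derivative uniqueness: Φ ∘ gi is constant on U
    have hΦU : ∀ y ∈ U, Φ (gi y) = Φ x₁ := by
      intro y hy
      have h1 : HasFDerivAt w (Φ (gi y)) y := hwd y hy
      have h2 : HasFDerivAt (fun a : EuclideanSpace ℝ (Fin d) => Φ x₁ (a - u x₁)) (Φ x₁) y := by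
        have := (Φ x₁).hasFDerivAt.comp y ((hasFDerivAt_id y).sub_const (u x₁))
        rw [ContinuousLinearMap.comp_id] at this
        exact this
      have haff : HasFDerivAt (fun a => w (u x₁) + Φ x₁ (a - u x₁)) (Φ x₁) y := h2.const_add _
      have heq' : w =ᶠ[𝓝 y] (fun a => w (u x₁) + Φ x₁ (a - u x₁)) :=
        Filter.eventually_of_mem (Metric.isOpen_ball.mem_nhds hy) waff
      have h3 : HasFDerivAt w (Φ x₁) y := haff.congr_of_eventuallyEq heq'
      exact h1.unique h3
    -- conclude
    have ev1 : ∀ᶠ x in 𝓝 x₁, x ∈ Ω := hΩo.eventually_mem hx₁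
    have ev2 : ∀ᶠ x in 𝓝 x₁, u x ∈ U :=
      ((hsu x₁ hx₁).hasFDerivAt.continuousAt).eventually
        (Metric.isOpen_ball.eventually_mem hy₁U)
    have ev3 : ∀ᶠ x in 𝓝 x₁, gi (u x) = x :=
      Filter.eventually_of_mem (Ph.open_source.mem_nhds hx₁P) hug
    filter_upwards [ev1, ev2, ev3] with x hxΩ hxU hgix
    have := hΦU (u x) hxU
    rwa [hgix] at this
  obtain ⟨x₀, hx₀⟩ := hΩc.nonempty
  have hconst : ∀ x ∈ Ω, Φ x = Φ x₀ := const_of_locally_const hΩc.isPreconnected Φ key hx₀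
  set Rcl := Φ x₀ with hRcl
  have hBR : ∀ x ∈ Ω, B x = Rcl.comp (A x) := by
    intro x hx
    have h1 : Φ x * A x = B x := by
      show B x * Ring.inverse (A x) * A x = B x
      exact Ring.inverse_mul_cancel_right _ _ (hAU x hx)
    rw [← hconst x hx, ← h1]
    rfl
  -- the difference is constant
  have hdiff : ∀ x ∈ Ω, v x - Rcl (u x) = v x₀ - Rcl (u x₀) := by
    apply const_of_locally_const hΩc.isPreconnected (fun x => v x - Rcl (u x)) ?_ hx₀
    intro x₁ hx₁
    obtain ⟨ε, hε, hball⟩ := Metric.isOpen_iff.1 hΩo x₁ hx₁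
    have hcvx := convex_ball x₁ ε
    have hmem : x₁ ∈ Metric.ball x₁ ε := Metric.mem_ball_self hε
    have hderiv : ∀ y ∈ Metric.ball x₁ ε, HasFDerivWithinAt (fun x => v x - Rcl (u x))
        ((B y) - Rcl.comp (A y)) (Metric.ball x₁ ε) y := by
      intro y hy
      exact (((hsv y (hball hy)).hasFDerivAt).sub
        ((Rcl.hasFDerivAt).comp y ((hsu y (hball hy)).hasFDerivAt))).hasFDerivWithinAt
    have hbound : ∀ y ∈ Metric.ball x₁ ε, ‖(B y) - Rcl.comp (A y)‖ ≤ 0 := by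
      intro y hy
      rw [hBR y (hball hy), sub_self]
      exact le_of_eq norm_zero
    filter_upwards [Metric.ball_mem_nhds x₁ hε] with y hy
    have hle := hcvx.norm_image_sub_le_of_norm_hasFDerivWithin_le hderiv hbound hmem hy
    rw [zero_mul] at hle
    have : v y - Rcl (u y) - (v x₁ - Rcl (u x₁)) = 0 :=
      norm_le_zero_iff.1 hle
    exact sub_eq_zero.1 this
  -- matrix extraction
  have hdu0 : (Jac u x₀).det ≠ 0 := ne_of_gt (hdu x₀ hx₀)
  set R : Matrix (Fin d) (Fin d) ℝ := Jac v x₀ * (Jac u x₀)⁻¹ with hRdef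
  have hJinv : (Matrix.toEuclideanCLM (𝕜 := ℝ) (Jac u x₀)⁻¹ :
      EuclideanSpace ℝ (Fin d) →L[ℝ] EuclideanSpace ℝ (Fin d)) = Ring.inverse (A x₀) := by
    have hmu : Jac u x₀ * (Jac u x₀)⁻¹ = 1 :=
      Matrix.mul_nonsing_inv _ (isUnit_iff_ne_zero.2 hdu0)
    have hum : (Jac u x₀)⁻¹ * Jac u x₀ = 1 :=
      Matrix.nonsing_inv_mul _ (isUnit_iff_ne_zero.2 hdu0)
    have h1 : A x₀ * (Matrix.toEuclideanCLM (𝕜 := ℝ) (Jac u x₀)⁻¹) = 1 := by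
      rw [← hAc, ← _root_.map_mul, hmu, _root_.map_one]
    have h2 : (Matrix.toEuclideanCLM (𝕜 := ℝ) (Jac u x₀)⁻¹) * A x₀ = 1 := by
      rw [← hAc, ← _root_.map_mul, hum, _root_.map_one]
    exact (Ring.inverse_unit ⟨A x₀, _, h1, h2⟩).symm
  have hRmap : (Matrix.toEuclideanCLM (𝕜 := ℝ) R :
      EuclideanSpace ℝ (Fin d) →L[ℝ] EuclideanSpace ℝ (Fin d)) = Rcl := by
    rw [hRdef, _root_.map_mul, hBc, hJinv, hRcl, hΦdef]
  have hiso : ∀ p q : EuclideanSpace ℝ (Fin d), ⟪Rcl p, Rcl q⟫ = ⟪p, q⟫ := by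
    intro p q
    rw [hRcl, hΦe x₀ hx₀]
    have e1 : A x₀ ((eA x₀ hx₀).symm p) = p := by
      rw [← heA x₀ hx₀]; exact (eA x₀ hx₀).apply_symm_apply p
    have e2 : A x₀ ((eA x₀ hx₀).symm q) = q := by
      rw [← heA x₀ hx₀]; exact (eA x₀ hx₀).apply_symm_apply q
    calc ⟪((B x₀).comp ((eA x₀ hx₀).symm :
            EuclideanSpace ℝ (Fin d) →L[ℝ] EuclideanSpace ℝ (Fin d))) p,
          ((B x₀).comp ((eA x₀ hx₀).symm :
            EuclideanSpace ℝ (Fin d) →L[ℝ] EuclideanSpace ℝ (Fin d))) q⟫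
        = ⟪B x₀ ((eA x₀ hx₀).symm p), B x₀ ((eA x₀ hx₀).symm q)⟫ := rfl
      _ = ⟪A x₀ ((eA x₀ hx₀).symm p), A x₀ ((eA x₀ hx₀).symm q)⟫ :=
          (hinner x₀ hx₀ _ _).symm
      _ = ⟪p, q⟫ := by rw [e1, e2]
  have hadj : ContinuousLinearMap.adjoint Rcl * Rcl = 1 := by
    refine ContinuousLinearMap.ext fun p => ?_
    refine ext_inner_right ℝ ?_
    intro q
    rw [ContinuousLinearMap.mul_apply, ContinuousLinearMap.adjoint_inner_left]
    rw [ContinuousLinearMap.one_apply]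
    exact hiso p q
  have hstar : star R = Rᵀ := by
    ext i j
    simp [Matrix.star_eq_conjTranspose, Matrix.conjTranspose_apply]
  have hortho : Rᵀ * R = 1 := by
    have hmm : (Matrix.toEuclideanCLM (𝕜 := ℝ)) (star R * R)
        = (Matrix.toEuclideanCLM (𝕜 := ℝ)) 1 := by
      rw [_root_.map_mul, map_star, _root_.map_one, hRmap,
        ContinuousLinearMap.star_eq_adjoint, hadj]
    have h := (Matrix.toEuclideanCLM (𝕜 := ℝ)).injective hmm
    rwa [hstar] at h
  have hdetR : 0 < R.det := by
    rw [hRdef, Matrix.det_mul, Matrix.det_nonsing_inv, Ring.inverse_eq_inv]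
    exact mul_pos (hdv x₀ hx₀) (inv_pos.2 (hdu x₀ hx₀))
  have hdet1 : R.det = 1 := by
    have h2 : R.det * R.det = 1 := by
      have := congrArg Matrix.det hortho
      rwa [Matrix.det_mul, Matrix.det_transpose, Matrix.det_one] at this
    rcases mul_self_eq_one_iff.1 h2 with h | h
    · exact h
    · linarith
  refine ⟨R, fun i => (v x₀ - Rcl (u x₀)) i, hortho, hdet1, ?_⟩
  intro x hx i
  have hdx := hdiff x hx
  have hvx : v x = Rcl (u x) + (v x₀ - Rcl (u x₀)) := by
    rw [← hdx]; abel
  have h1 : v x i = (Rcl (u x)) i + (v x₀ - Rcl (u x₀)) i := by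
    rw [hvx]
    simp [PiLp.add_apply]
  have h2 : (Rcl (u x)) i = ∑ j, R i j * u x j := by
    rw [← hRmap]
    have hh := Matrix.ofLp_toEuclideanCLM (𝕜 := ℝ) R (u x)
    have hi := congrFun hh i
    rw [hi]
    simp [Matrix.mulVec, dotProduct]
  rw [h1, h2]
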